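/- Let C := {f ∈ L¹[0,1] : f ≥ 0 a.e. and ∫₀¹ f = 1} and, for a ∈ [0,1], let C_a be the convex hull of C ∪ {a·𝟙}, where 𝟙 is the constant function 1. Let (λ_n) ⊆ [0,1] with λ_n → λ, let (f_n) ⊆ C, and suppose the sequence g_n := λ_n f_n + (1 − λ_n)·a·𝟙 converges Lebesgue-almost everywhere to some g ∈ L¹[0,1]. Then there exists h ∈ C_a such that limsup_n ‖g_n − h‖₁ ≤ (1 + a)·limsup_n ‖g_n − g‖₁. -/

import Mathlib

open MeasureTheory Filter Topology

/-- Lebesgue measure on `[0,1]`. -/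
noncomputable def μ01 : Measure ℝ := volume.restrict (Set.Icc 0 1)

instance : IsFiniteMeasure μ01 := by
  constructor
  simp [μ01, Real.volume_Icc]

/-- The constant function `1` as an element of `L¹[0,1]`. -/
noncomputable def oneL1 : Lp ℝ 1 μ01 := (memLp_const (1 : ℝ)).toLp (fun _ => (1 : ℝ))

/-- `C = {f ∈ L¹[0,1] : f ≥ 0 a.e., ∫ f = 1}`. -/
noncomputable def posProbC : Set (Lp ℝ 1 μ01) :=
  {f | (∀ᵐ t ∂μ01, 0 ≤ f t) ∧ ∫ t, f t ∂μ01 = 1}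

section Aux

lemma μ01_univ : μ01 Set.univ = 1 := by
  simp [μ01, Real.volume_Icc]

lemma oneL1_coe : (oneL1 : ℝ → ℝ) =ᵐ[μ01] fun _ => (1 : ℝ) := MemLp.coeFn_toLp _

lemma integrable_L1 (f : Lp ℝ 1 μ01) : Integrable (f : ℝ → ℝ) μ01 := L1.integrable_coeFn f

lemma norm_L1_eq (f : Lp ℝ 1 μ01) : ‖f‖ = ∫ t, |(f : ℝ → ℝ) t| ∂μ01 := by
  rw [L1.norm_eq_integral_norm]
  simp [Real.norm_eq_abs]

lemma integral_const_μ01 (c : ℝ) : ∫ _t, c ∂μ01 = c := by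
  rw [integral_const]
  simp [Measure.real, μ01_univ]

lemma integral_oneL1 : ∫ t, (oneL1 : ℝ → ℝ) t ∂μ01 = 1 := by
  rw [integral_congr_ae oneL1_coe, integral_const_μ01]

lemma norm_oneL1 : ‖oneL1‖ = 1 := by
  rw [norm_L1_eq, integral_congr_ae (g := fun _ => (1:ℝ))
    (oneL1_coe.mono fun t ht => by rw [ht]; norm_num), integral_const_μ01]

end Aux

/-- If `g_n = λ_n f_n + (1-λ_n)·a·𝟙` (with `f_n ∈ C`, `λ_n ∈ [0,1]`, `λ_n → λ`) converges
almost everywhere to `g`, then there is `h ∈ C_a = conv(C ∪ {a𝟙})` with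
`limsup ‖g_n - h‖ ≤ (1+a)·limsup ‖g_n - g‖`. -/
theorem exists_mem_convexHull_limsup_le
    (a : ℝ) (ha : a ∈ Set.Icc (0 : ℝ) 1)
    (lam : ℕ → ℝ) (hlam : ∀ n, lam n ∈ Set.Icc (0 : ℝ) 1)
    (l : ℝ) (hliml : Tendsto lam atTop (𝓝 l))
    (f : ℕ → Lp ℝ 1 μ01) (hf : ∀ n, f n ∈ posProbC)
    (g : Lp ℝ 1 μ01)
    (hae : ∀ᵐ t ∂μ01, Tendsto
      (fun n => ((lam n • f n + (1 - lam n) • (a • oneL1) : Lp ℝ 1 μ01) : ℝ → ℝ) t)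
      atTop (𝓝 ((g : ℝ → ℝ) t))) :
    ∃ h ∈ convexHull ℝ (posProbC ∪ {a • oneL1}),
      limsup (fun n => ‖(lam n • f n + (1 - lam n) • (a • oneL1)) - h‖) atTop ≤
        (1 + a) * limsup (fun n => ‖(lam n • f n + (1 - lam n) • (a • oneL1)) - g‖) atTop := by
  obtain ⟨ha0, ha1⟩ := ha
  set G : ℕ → Lp ℝ 1 μ01 := fun n => lam n • f n + (1 - lam n) • (a • oneL1) with hGdef
  have hl0 : 0 ≤ l := ge_of_tendsto' hliml fun n => (hlam n).1
  have hl1 : l ≤ 1 := le_of_tendsto hliml (Eventually.of_forall fun n => (hlam n).2)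
  -- coercion of G n
  have hGcoe : ∀ n, (G n : ℝ → ℝ) =ᵐ[μ01]
      fun t => lam n * (f n : ℝ → ℝ) t + (1 - lam n) * a := by
    intro n
    filter_upwards [Lp.coeFn_add (lam n • f n) ((1 - lam n) • (a • oneL1)),
      Lp.coeFn_smul (lam n) (f n), Lp.coeFn_smul (1 - lam n) (a • oneL1),
      Lp.coeFn_smul a oneL1, oneL1_coe] with t h1 h2 h3 h4 h5
    simp only [hGdef]
    simp only [Pi.add_apply] at h1
    rw [h1, h2, h3]
    simp only [Pi.smul_apply, smul_eq_mul, h4, h5]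
    ring
  -- integral of f n
  have hfint : ∀ n, ∫ t, (f n : ℝ → ℝ) t ∂μ01 = 1 := fun n => (hf n).2
  -- integral of G n
  have hGint : ∀ n, ∫ t, (G n : ℝ → ℝ) t ∂μ01 = lam n + (1 - lam n) * a := by
    intro n
    rw [integral_congr_ae (hGcoe n), integral_add
      ((integrable_L1 (f n)).const_mul _) (integrable_const _),
      integral_const_mul, hfint n, integral_const_μ01, mul_one]
  -- lower bound for G n
  have hGlb : ∀ n, ∀ᵐ t ∂μ01, (1 - lam n) * a ≤ (G n : ℝ → ℝ) t := by
    intro n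
    filter_upwards [hGcoe n, (hf n).1] with t h1 h2
    rw [h1]
    nlinarith [(hlam n).1]
  -- lower bound for g
  have hg_lb : ∀ᵐ t ∂μ01, (1 - l) * a ≤ (g : ℝ → ℝ) t := by
    filter_upwards [ae_all_iff.2 hGlb, hae] with t h1 h2
    exact le_of_tendsto_of_tendsto' ((tendsto_const_nhds.sub hliml).mul_const a) h2 h1
  have hg_nn : ∀ᵐ t ∂μ01, 0 ≤ (g : ℝ → ℝ) t := by
    filter_upwards [hg_lb] with t ht
    nlinarith
  set s : ℝ := l + (1 - l) * a with hsdef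
  set t0 : ℝ := ∫ t, (g : ℝ → ℝ) t ∂μ01 with ht0def
  have hs_nn : 0 ≤ s := by nlinarith
  have hslim : Tendsto (fun n => lam n + (1 - lam n) * a) atTop (𝓝 s) :=
    hliml.add ((tendsto_const_nhds.sub hliml).mul_const a)
  -- Fatou: t0 ≤ s
  have ht0s : t0 ≤ s := by
    have hmeas : ∀ n, AEMeasurable (fun t => ENNReal.ofReal ((G n : ℝ → ℝ) t)) μ01 := fun n =>
      ENNReal.measurable_ofReal.comp_aemeasurable (Lp.aestronglyMeasurable (G n)).aemeasurable
    have key := lintegral_liminf_le' (u := atTop) hmeas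
    have h1 : ∫⁻ t, ENNReal.ofReal ((g : ℝ → ℝ) t) ∂μ01 ≤
        atTop.liminf fun n => ∫⁻ t, ENNReal.ofReal ((G n : ℝ → ℝ) t) ∂μ01 := by
      refine le_trans (le_of_eq (lintegral_congr_ae ?_)) key
      filter_upwards [hae] with t ht
      exact ((ENNReal.continuous_ofReal.tendsto _).comp ht).liminf_eq.symm
    have hGnn : ∀ n, 0 ≤ᵐ[μ01] (G n : ℝ → ℝ) := by
      intro n
      filter_upwards [hGlb n] with t ht
      simp only [Pi.zero_apply]
      nlinarith [(hlam n).2, ha0]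
    have h2 : ∀ n, ∫⁻ t, ENNReal.ofReal ((G n : ℝ → ℝ) t) ∂μ01 =
        ENNReal.ofReal (lam n + (1 - lam n) * a) := by
      intro n
      rw [← ofReal_integral_eq_lintegral_ofReal (integrable_L1 (G n)) (hGnn n), hGint n]
    have h3 : (atTop.liminf fun n => ∫⁻ t, ENNReal.ofReal ((G n : ℝ → ℝ) t) ∂μ01) =
        ENNReal.ofReal s := by
      simp_rw [h2]
      exact ((ENNReal.continuous_ofReal.tendsto _).comp hslim).liminf_eq
    rw [← ofReal_integral_eq_lintegral_ofReal (integrable_L1 g) hg_nn, h3] at h1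
    exact (ENNReal.ofReal_le_ofReal_iff hs_nn).1 h1
  -- (1-l)*a ≤ t0
  have hlb_t0 : (1 - l) * a ≤ t0 := by
    rw [ht0def, ← integral_const_μ01 ((1 - l) * a)]
    exact integral_mono_ae (integrable_const _) (integrable_L1 g) hg_lb
  -- s - t0 ≤ limsup ‖G n - g‖
  set L : ℝ := limsup (fun n => ‖G n - g‖) atTop with hLdef
  have hGg_bdd : ∀ n, ‖G n - g‖ ≤ 2 + ‖g‖ := by
    intro n
    have h1 : ‖G n‖ ≤ 2 := by
      calc ‖G n‖ ≤ ‖lam n • f n‖ + ‖(1 - lam n) • (a • oneL1)‖ := norm_add_le _ _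
      _ ≤ 1 * ‖f n‖ + 1 * (1 * ‖oneL1‖) := by
          rw [norm_smul, norm_smul, norm_smul]
          gcongr
          · exact abs_le.2 ⟨by linarith [(hlam n).1], (hlam n).2⟩
          · exact abs_le.2 ⟨by linarith [(hlam n).2], by linarith [(hlam n).1]⟩
          · exact abs_le.2 ⟨by linarith, ha1⟩
      _ ≤ 2 := by
          have : ‖f n‖ = 1 := by
            rw [norm_L1_eq, ← (hf n).2]
            refine integral_congr_ae ?_
            filter_upwards [(hf n).1] with t ht
            exact abs_of_nonneg ht
          rw [this, norm_oneL1]; norm_num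
    calc ‖G n - g‖ ≤ ‖G n‖ + ‖g‖ := norm_sub_le _ _
    _ ≤ 2 + ‖g‖ := by linarith
  have hbddL : IsBoundedUnder (· ≤ ·) atTop fun n => ‖G n - g‖ :=
    isBoundedUnder_of ⟨2 + ‖g‖, hGg_bdd⟩
  have hcobddL : IsCoboundedUnder (· ≤ ·) atTop fun n => ‖G n - g‖ :=
    (isBoundedUnder_of ⟨0, fun n => norm_nonneg _⟩ :
      IsBoundedUnder (· ≥ ·) atTop fun n => ‖G n - g‖).isCoboundedUnder_le
  have hL_nn : 0 ≤ L := by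
    refine le_limsup_of_frequently_le ?_ hbddL
    exact Frequently.of_forall fun n => norm_nonneg _
  have hstL : s - t0 ≤ L := by
    have hub : ∀ n, (lam n + (1 - lam n) * a) - t0 ≤ ‖G n - g‖ := by
      intro n
      have h1 : ‖G n - g‖ = ∫ t, |(G n : ℝ → ℝ) t - (g : ℝ → ℝ) t| ∂μ01 := by
        rw [norm_L1_eq]
        refine integral_congr_ae ?_
        filter_upwards [Lp.coeFn_sub (G n) g] with t ht
        rw [ht]; rfl
      have h2 : (lam n + (1 - lam n) * a) - t0 =
          ∫ t, ((G n : ℝ → ℝ) t - (g : ℝ → ℝ) t) ∂μ01 := by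
        rw [integral_sub (integrable_L1 (G n)) (integrable_L1 g), hGint n, ht0def]
      rw [h1, h2]
      exact integral_mono (((integrable_L1 (G n))).sub (integrable_L1 g))
        (((integrable_L1 (G n))).sub (integrable_L1 g)).abs fun t => le_abs_self _
    have htend : Tendsto (fun n => (lam n + (1 - lam n) * a) - t0) atTop (𝓝 (s - t0)) :=
      hslim.sub tendsto_const_nhds
    calc s - t0 = limsup (fun n => (lam n + (1 - lam n) * a) - t0) atTop := htend.limsup_eq.symm
    _ ≤ L := limsup_le_limsup (Eventually.of_forall hub) htend.isCoboundedUnder_le hbddL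
  -- construct h
  set c : ℝ := t0 - (1 - l) * a with hcdef
  have hc0 : 0 ≤ c := by linarith
  have hcl : c ≤ l := by
    simp only [hcdef, hsdef] at ht0s ⊢
    linarith
  set K : ℝ := a * (s - t0) with hKdef
  have hK_eq : K = a * (l - c) := by rw [hKdef, hcdef, hsdef]; ring
  have hK_nn : 0 ≤ K := mul_nonneg ha0 (by linarith)
  set h : Lp ℝ 1 μ01 := g + K • oneL1 with hhdef
  have hgh : ‖g - h‖ = K := by
    have : g - h = -(K • oneL1) := by rw [hhdef]; abel
    rw [this, norm_neg, norm_smul, norm_oneL1, mul_one, Real.norm_eq_abs, abs_of_nonneg hK_nn]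
  have hmem : h ∈ convexHull ℝ (posProbC ∪ {a • oneL1}) := by
    rcases eq_or_lt_of_le hc0 with hc | hc
    · -- c = 0 : g is a.e. the constant (1-l)*a, and h = a • oneL1
      have hgconst : (g : ℝ → ℝ) =ᵐ[μ01] fun _ => (1 - l) * a := by
        have hzero : ∫ t, ((g : ℝ → ℝ) t - (1 - l) * a) ∂μ01 = 0 := by
          rw [integral_sub (integrable_L1 g) (integrable_const _), integral_const_μ01]
          simp only [← ht0def, ← hcdef, ← hc]
        have := (integral_eq_zero_iff_of_nonneg_ae
          (hg_lb.mono fun t ht => by simp; linarith)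
          ((integrable_L1 g).sub (integrable_const _))).1 hzero
        filter_upwards [this] with t ht
        have : (g : ℝ → ℝ) t - (1 - l) * a = 0 := ht
        linarith
      have heq : h = a • oneL1 := by
        refine Lp.ext ?_
        have hKl : K = a * l := by rw [hK_eq, ← hc]; ring
        filter_upwards [Lp.coeFn_add g (K • oneL1), Lp.coeFn_smul K oneL1,
          Lp.coeFn_smul a oneL1, oneL1_coe, hgconst] with t h1 h2 h3 h4 h5
        rw [hhdef, h1]
        simp only [Pi.add_apply, h2, Pi.smul_apply, smul_eq_mul, h3, h4, h5]
        rw [hKl]; ring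
      rw [heq]
      exact subset_convexHull ℝ _ (Or.inr rfl)
    · -- c > 0
      set f' : Lp ℝ 1 μ01 := c⁻¹ • (g - ((1 - l) * a) • oneL1) with hf'def
      have hf'coe : (f' : ℝ → ℝ) =ᵐ[μ01] fun t => c⁻¹ * ((g : ℝ → ℝ) t - (1 - l) * a) := by
        filter_upwards [Lp.coeFn_smul c⁻¹ (g - ((1 - l) * a) • oneL1),
          Lp.coeFn_sub g (((1 - l) * a) • oneL1), Lp.coeFn_smul ((1 - l) * a) oneL1,
          oneL1_coe] with t h1 h2 h3 h4
        rw [hf'def, h1]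
        simp only [Pi.smul_apply, smul_eq_mul, h2, Pi.sub_apply, h3, h4]
        ring_nf
      have hf'mem : f' ∈ posProbC := by
        constructor
        · filter_upwards [hf'coe, hg_lb] with t h1 h2
          rw [h1]
          exact mul_nonneg (inv_nonneg.2 hc0) (by linarith)
        · rw [integral_congr_ae hf'coe, integral_const_mul,
            integral_sub (integrable_L1 g) (integrable_const _), integral_const_μ01,
            ← ht0def, ← hcdef, inv_mul_cancel₀ hc.ne']
      have hcomb : c • f' + (1 - c) • (a • oneL1) = h := by
        rw [hf'def, smul_inv_smul₀ hc.ne', hhdef]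
        have : K • oneL1 = (-((1 - l) * a) + (1 - c) * a) • oneL1 := by
          rw [hK_eq]; ring_nf
        rw [this]
        module
      have hseg : h ∈ segment ℝ f' (a • oneL1) :=
        ⟨c, 1 - c, hc0, by linarith, by ring, hcomb⟩
      have hx : f' ∈ posProbC ∪ {a • oneL1} := Or.inl hf'mem
      have hy : a • oneL1 ∈ posProbC ∪ {a • oneL1} := Or.inr rfl
      exact segment_subset_convexHull hx hy hseg
  refine ⟨h, hmem, ?_⟩
  have htri : ∀ n, ‖G n - h‖ ≤ ‖G n - g‖ + K := by
    intro n
    calc ‖G n - h‖ = ‖(G n - g) + (g - h)‖ := by rw [sub_add_sub_cancel]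
    _ ≤ ‖G n - g‖ + ‖g - h‖ := norm_add_le _ _
    _ = ‖G n - g‖ + K := by rw [hgh]
  calc limsup (fun n => ‖G n - h‖) atTop
      ≤ limsup (fun n => ‖G n - g‖ + K) atTop := by
        refine limsup_le_limsup (Eventually.of_forall htri) ?_ ?_
        · exact ((isBoundedUnder_of ⟨0, fun n => norm_nonneg _⟩ :
            IsBoundedUnder (· ≥ ·) atTop fun n => ‖G n - h‖).isCoboundedUnder_le)
        · exact isBoundedUnder_of ⟨2 + ‖g‖ + K, fun n => by have := hGg_bdd n; linarith⟩
    _ = L + K := limsup_add_const atTop _ K hbddL hcobddL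
    _ ≤ L + a * L := by
        have : K ≤ a * L := by
          rw [hKdef]
          exact mul_le_mul_of_nonneg_left hstL ha0
        linarith
    _ = (1 + a) * L := by ring
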